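/- (Minimal scale lemma.) Let (Ω, F, P) be a probability space, and fix K ≥ 1, s > 0, β > 0. Suppose (X_n)_{n∈ℕ} is a sequence of nonnegative random variables such that for every n ∈ ℕ there exists a nonnegative random variable Z_n with E[ exp( (Z_n / (K·3^{−nβ}))^s ) ] ≤ 2 and X_n ≤ K + Z_n almost surely. Then there exists a constant C = C(s, β, K) < ∞ such that the random variable M := sup{ 3^n : n ∈ ℕ, X_n ≥ K + 1 } (with the convention M := 0 when the set is empty) satisfies E[ exp( (M/C)^{sβ} ) ] ≤ 2; in particular M < ∞ almost surely. -/

import Mathlib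

open MeasureTheory
open scoped ENNReal

noncomputable section

namespace MinimalScale

/-- The exponential on `[0, ∞]`, with `exp ∞ = ∞`. -/
def expE (x : ℝ≥0∞) : ℝ≥0∞ := if x = ⊤ then ⊤ else ENNReal.ofReal (Real.exp x.toReal)

/-- The minimal scale `M(ω) = sup {3^n : X_n(ω) ≥ K + 1}` (`0` if the set is empty),
as a `[0, ∞]`-valued random variable. -/
def minScale {Ω : Type*} (K : ℝ) (X : ℕ → Ω → ℝ) (ω : Ω) : ℝ≥0∞ :=
  ⨆ (n : ℕ) (_ : K + 1 ≤ X n ω), ((3 : ℝ≥0∞) ^ n)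

private lemma expE_ofReal {y : ℝ} (hy : 0 ≤ y) :
    expE (ENNReal.ofReal y) = ENNReal.ofReal (Real.exp y) := by
  rw [expE, if_neg ENNReal.ofReal_ne_top, ENNReal.toReal_ofReal hy]

private lemma exp_sub_exp_le {a b : ℝ} (_hba : b ≤ a) :
    Real.exp a - Real.exp b ≤ (a - b) * Real.exp a := by
  have h := Real.add_one_le_exp (b - a)
  have h2 : Real.exp b = Real.exp a * Real.exp (b - a) := by
    rw [← Real.exp_add]; ring_nf
  nlinarith [Real.exp_pos a]

private lemma mul_exp_neg_le {a x : ℝ} (ha : 0 < a) (hx : 0 ≤ x) :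
    x * Real.exp (-(a * x)) ≤ 1 / a := by
  have hep := Real.exp_pos (a * x)
  have h1 := Real.add_one_le_exp (a * x)
  have h2 : x * Real.exp (-(a * x)) ≤ (Real.exp (a * x) / a) * Real.exp (-(a * x)) := by
    apply mul_le_mul_of_nonneg_right _ (Real.exp_pos _).le
    rw [le_div_iff₀ ha]
    nlinarith
  have h3 : (Real.exp (a * x) / a) * Real.exp (-(a * x)) = 1 / a := by
    rw [Real.exp_neg]; field_simp
  rw [h3] at h2
  exact h2

private lemma bernoulli_pow {q : ℝ} (hq : 1 ≤ q) (n : ℕ) : 1 + n * (q - 1) ≤ q ^ n := by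
  have h := one_add_mul_le_pow (by linarith : (-2:ℝ) ≤ q - 1) n
  have h2 : 1 + (q - 1) = q := by ring
  rwa [h2] at h

set_option maxHeartbeats 1000000 in
/-- Minimal scale lemma. If `X_n ≤ K + O_s(K 3^{-nβ})` for every `n`, then
the random scale `M = sup {3^n : X_n ≥ K + 1}` satisfies `M ≤ O_{sβ}(C)` for some
`C = C(s, β, K)`; in particular `M < ∞` almost surely. -/
theorem statement11 {Ω : Type*} [MeasurableSpace Ω] (P : Measure Ω) [IsProbabilityMeasure P]
    (K s β : ℝ) (hK : 1 ≤ K) (hs : 0 < s) (hβ : 0 < β)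
    (X : ℕ → Ω → ℝ) (hXm : ∀ n, Measurable (X n)) (hX0 : ∀ n ω, 0 ≤ X n ω)
    (hbound : ∀ n : ℕ, ∃ Z : Ω → ℝ, Measurable Z ∧ (∀ ω, 0 ≤ Z ω) ∧
      (∫⁻ ω, ENNReal.ofReal
          (Real.exp ((Z ω / (K * 3 ^ (-(n : ℝ) * β))) ^ s)) ∂P ≤ 2) ∧
      ∀ᵐ ω ∂P, X n ω ≤ K + Z ω) :
    ∃ C : ℝ, 0 < C ∧
      (∫⁻ ω, expE ((minScale K X ω / ENNReal.ofReal C) ^ (s * β)) ∂P ≤ 2) ∧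
      ∀ᵐ ω ∂P, minScale K X ω < ⊤ := by
  choose Z hZm hZ0 hZint hZae using hbound
  set t : ℝ := s * β with htdef
  have ht : 0 < t := mul_pos hs hβ
  set q : ℝ := (3:ℝ) ^ t with hqdef
  have hq1 : 1 < q := by
    rw [hqdef, Real.one_lt_rpow_iff (by norm_num : (0:ℝ) ≤ 3)]
    exact Or.inl ⟨by norm_num, ht⟩
  clear_value q
  have hq0 : 0 < q := by linarith
  have hqn1 : ∀ n : ℕ, 1 ≤ q ^ n := fun n => one_le_pow₀ hq1.le
  have hK0 : (0:ℝ) < K := lt_of_lt_of_le one_pos hK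
  set c : ℝ := K ^ (-s) with hcdef
  have hc : 0 < c := Real.rpow_pos_of_pos hK0 _
  clear_value c
  set d : ℝ := c / 2 with hddef
  have hd : 0 < d := by positivity
  have hcd : c = d + d := by rw [hddef]; ring
  clear_value d
  set ρ : ℝ := Real.exp (-(c * (q - 1))) with hρdef
  have hρ0 : 0 < ρ := Real.exp_pos _
  have hρ1 : ρ < 1 := by
    rw [hρdef, Real.exp_lt_one_iff]; nlinarith
  clear_value ρ
  set r : ℝ := Real.exp (-(d / 2 * (q - 1))) with hrdef
  have hr0 : 0 < r := Real.exp_pos _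
  have hr1 : r < 1 := by
    rw [hrdef, Real.exp_lt_one_iff]; nlinarith
  have h1r : 0 < 1 - r := by linarith
  set A0 : ℝ := (1 - ρ)⁻¹ with hA0def
  have h1ρ : 0 < 1 - ρ := by linarith
  have hA0 : 0 < A0 := by rw [hA0def]; positivity
  clear_value A0
  set θ : ℝ := min d (d * (1 - r) / (4 * A0)) with hθdef
  have hθ0 : 0 < θ := lt_min hd (by positivity)
  have hθd : θ ≤ d := min_le_left _ _
  have hθ2 : θ ≤ d * (1 - r) / (4 * A0) := min_le_right _ _
  clear_value θ
  set C : ℝ := θ ^ (-t⁻¹) with hCdef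
  have hC : 0 < C := Real.rpow_pos_of_pos hθ0 _
  have hCt : C ^ t = θ⁻¹ := by
    rw [hCdef, ← Real.rpow_mul hθ0.le]
    have hne : -t⁻¹ * t = -1 := by field_simp
    rw [hne, Real.rpow_neg_one]
  clear_value C
  -- the key scaling identity
  have hkey : ∀ n : ℕ, ((3:ℝ) ^ n / C) ^ t = θ * q ^ n := by
    intro n
    rw [Real.div_rpow (by positivity) hC.le, hCt]
    have h3 : ((3:ℝ) ^ n) ^ t = q ^ n := by
      rw [← Real.rpow_natCast (3:ℝ) n, ← Real.rpow_mul (by norm_num : (0:ℝ) ≤ 3),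
        mul_comm, Real.rpow_mul (by norm_num : (0:ℝ) ≤ 3), Real.rpow_natCast, ← hqdef]
    rw [h3, div_eq_mul_inv, inv_inv, mul_comm]
  -- tail probabilities
  have hprob : ∀ m : ℕ, P {ω | K + 1 ≤ X m ω} ≤ 2 * ENNReal.ofReal (Real.exp (-(c * q ^ m))) := by
    intro m
    set a : ℝ := K * 3 ^ (-(m:ℝ) * β) with hadef
    have ha : 0 < a := mul_pos hK0 (Real.rpow_pos_of_pos (by norm_num) _)
    have hainv : (1 / a) ^ s = c * q ^ m := by
      rw [hadef, one_div, mul_inv, Real.mul_rpow (by positivity) (by positivity)]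
      congr 1
      · rw [Real.inv_rpow hK0.le, ← Real.rpow_neg hK0.le, ← hcdef]
      · rw [← Real.rpow_neg (by norm_num : (0:ℝ) ≤ 3), ← Real.rpow_mul (by norm_num : (0:ℝ) ≤ 3),
          ← Real.rpow_natCast q m, hqdef, ← Real.rpow_mul (by norm_num : (0:ℝ) ≤ 3)]
        congr 1
        rw [htdef]; ring
    have hZint' := hZint m
    rw [← hadef] at hZint'
    have hfm : Measurable fun ω => ENNReal.ofReal (Real.exp ((Z m ω / a) ^ s)) :=
      ENNReal.measurable_ofReal.comp (((hZm m).div_const a).pow_const s).exp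
    have h1 : ENNReal.ofReal (Real.exp (c * q ^ m)) * P {ω | K + 1 ≤ X m ω} ≤ 2 := by
      rw [← setLIntegral_const]
      calc (∫⁻ _ω in {ω | K + 1 ≤ X m ω}, ENNReal.ofReal (Real.exp (c * q ^ m)) ∂P)
          ≤ ∫⁻ ω in {ω | K + 1 ≤ X m ω}, ENNReal.ofReal (Real.exp ((Z m ω / a) ^ s)) ∂P := by
            apply setLIntegral_mono_ae hfm.aemeasurable
            filter_upwards [hZae m] with ω hω hmem
            apply ENNReal.ofReal_le_ofReal
            apply Real.exp_le_exp.mpr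
            rw [← hainv]
            have hZ1 : 1 ≤ Z m ω := by
              have hx : K + 1 ≤ X m ω := hmem
              linarith
            gcongr
        _ ≤ ∫⁻ ω, ENNReal.ofReal (Real.exp ((Z m ω / a) ^ s)) ∂P :=
            setLIntegral_le_lintegral _ _
        _ ≤ 2 := hZint'
    have hx0 : ENNReal.ofReal (Real.exp (c * q ^ m)) ≠ 0 :=
      ne_of_gt (ENNReal.ofReal_pos.mpr (Real.exp_pos _))
    calc P {ω | K + 1 ≤ X m ω}
        = (ENNReal.ofReal (Real.exp (c * q ^ m)))⁻¹ *
          (ENNReal.ofReal (Real.exp (c * q ^ m)) * P {ω | K + 1 ≤ X m ω}) := by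
          rw [← mul_assoc, ENNReal.inv_mul_cancel hx0 ENNReal.ofReal_ne_top, one_mul]
      _ ≤ (ENNReal.ofReal (Real.exp (c * q ^ m)))⁻¹ * 2 := mul_le_mul_right h1 _
      _ = 2 * ENNReal.ofReal (Real.exp (-(c * q ^ m))) := by
          rw [Real.exp_neg, ENNReal.ofReal_inv_of_pos (Real.exp_pos _), mul_comm]
  -- the events A n
  set A : ℕ → Set Ω := fun n => ⋃ k : ℕ, {ω | K + 1 ≤ X (n + k) ω} with hAdef
  have hAm : ∀ n, MeasurableSet (A n) := by
    intro n
    rw [hAdef]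
    exact MeasurableSet.iUnion fun k => measurableSet_le measurable_const (hXm _)
  have hAmem : ∀ (ω : Ω) (n m : ℕ), n ≤ m → K + 1 ≤ X m ω → ω ∈ A n := by
    intro ω n m hnm hm
    rw [hAdef]
    refine Set.mem_iUnion.mpr ⟨m - n, ?_⟩
    have he : n + (m - n) = m := by omega
    rw [Set.mem_setOf_eq, he]
    exact hm
  clear_value A
  have hPA : ∀ n, P (A n) ≤ 2 * ENNReal.ofReal (Real.exp (-(c * q ^ n)) * A0) := by
    intro n
    calc P (A n) ≤ ∑' k, P {ω | K + 1 ≤ X (n + k) ω} := by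
          rw [hAdef]; exact measure_iUnion_le _
      _ ≤ ∑' k : ℕ, 2 * ENNReal.ofReal (Real.exp (-(c * q ^ n)) * ρ ^ k) := by
          apply ENNReal.tsum_le_tsum; intro k
          refine le_trans (hprob (n + k)) ?_
          apply mul_le_mul_right
          apply ENNReal.ofReal_le_ofReal
          have hb : q ^ n + k * (q - 1) ≤ q ^ (n + k) := by
            have hb1 := bernoulli_pow hq1.le k
            have hb2 := hqn1 n
            have hk0 : (0:ℝ) ≤ (k:ℝ) * (q - 1) :=
              mul_nonneg (Nat.cast_nonneg k) (by linarith)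
            calc q ^ n + (k:ℝ) * (q - 1) ≤ q ^ n * (1 + k * (q - 1)) := by nlinarith
              _ ≤ q ^ n * q ^ k := by nlinarith [pow_pos hq0 n]
              _ = q ^ (n + k) := (pow_add q n k).symm
          rw [hρdef, ← Real.exp_nat_mul, ← Real.exp_add]
          apply Real.exp_le_exp.mpr
          nlinarith
      _ = 2 * (ENNReal.ofReal (Real.exp (-(c * q ^ n))) * ∑' k : ℕ, (ENNReal.ofReal ρ) ^ k) := by
          rw [ENNReal.tsum_mul_left]
          congr 1
          rw [← ENNReal.tsum_mul_left]
          congr 1; funext k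
          rw [ENNReal.ofReal_mul (Real.exp_nonneg _), ENNReal.ofReal_pow hρ0.le]
      _ = 2 * ENNReal.ofReal (Real.exp (-(c * q ^ n)) * A0) := by
          rw [ENNReal.tsum_geometric, ENNReal.ofReal_mul (Real.exp_nonneg _)]
          congr 1
          rw [hA0def, ← ENNReal.ofReal_one, ← ENNReal.ofReal_sub _ hρ0.le,
            ← ENNReal.ofReal_inv_of_pos h1ρ]
  -- the increments
  set G : ℕ → ℝ := fun n => Real.exp (θ * q ^ n) with hGdef
  have hG1 : ∀ n, 1 ≤ G n := by
    intro n; rw [hGdef]; exact Real.one_le_exp (by positivity)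
  have hGG : ∀ i j : ℕ, i ≤ j → G i ≤ G j := by
    intro i j hij
    rw [hGdef]
    simp only
    apply Real.exp_le_exp.mpr
    have h := pow_le_pow_right₀ hq1.le hij
    exact mul_le_mul_of_nonneg_left h hθ0.le
  clear_value G
  set Gp : ℕ → ℝ := fun n => if n = 0 then 1 else G (n - 1) with hGpdef
  have hGp0 : Gp 0 = 1 := by simp only [hGpdef]; norm_num
  have hGps : ∀ m : ℕ, Gp (m + 1) = G m := by
    intro m
    simp only [hGpdef, Nat.succ_ne_zero, if_false, Nat.add_sub_cancel]
  clear_value Gp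
  set Δ : ℕ → ℝ := fun n => G n - Gp n with hΔdef
  have hΔeq : ∀ n, Δ n = G n - Gp n := by intro n; rw [hΔdef]
  clear_value Δ
  have hGmono : ∀ n, Gp n ≤ G n := by
    intro n
    cases n with
    | zero => rw [hGp0]; exact hG1 0
    | succ m => rw [hGps m]; exact hGG m (m + 1) (Nat.le_succ m)
  have hΔ0 : ∀ n, 0 ≤ Δ n := fun n => by rw [hΔeq]; exact sub_nonneg.mpr (hGmono n)
  have hΔsum : ∀ N, ∑ n ∈ Finset.range (N + 1), Δ n = G N - 1 := by
    intro N
    induction N with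
    | zero => simp [hΔeq, hGp0]
    | succ m ih =>
        rw [Finset.sum_range_succ, ih, hΔeq, hGps m]
        ring
  have hΔle : ∀ n, Δ n ≤ θ * q ^ n * G n := by
    intro n
    have hGexp : ∀ m, G m = Real.exp (θ * q ^ m) := fun m => by rw [hGdef]
    have hb0 : ∃ b : ℝ, Gp n = Real.exp b ∧ 0 ≤ b ∧ b ≤ θ * q ^ n := by
      cases n with
      | zero =>
          exact ⟨0, by rw [hGp0, Real.exp_zero], le_refl 0, by positivity⟩
      | succ m =>
          refine ⟨θ * q ^ m, by rw [hGps m, hGexp m], by positivity, ?_⟩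
          have h := pow_le_pow_right₀ hq1.le (Nat.le_succ m)
          exact mul_le_mul_of_nonneg_left h hθ0.le
    obtain ⟨b, hb, hb1, hb2⟩ := hb0
    have hkey2 := exp_sub_exp_le hb2
    rw [hΔeq, hb, hGexp n]
    nlinarith [Real.exp_pos (θ * q ^ n)]
  set D : ℕ → ℝ≥0∞ := fun n => ENNReal.ofReal (Δ n) with hDdef
  have hDeq : ∀ n, D n = ENNReal.ofReal (Δ n) := fun n => by rw [hDdef]
  clear_value D
  set T : Ω → ℝ≥0∞ := fun ω => ∑' n, (A n).indicator (fun _ => D n) ω with hTdef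
  have hTeq : ∀ ω, T ω = ∑' n, (A n).indicator (fun _ => D n) ω := fun ω => by rw [hTdef]
  clear_value T
  -- partial sums of the indicators
  have hGsum : ∀ (ω : Ω) (N : ℕ), (∀ n, n ≤ N → ω ∈ A n) →
      ∑ n ∈ Finset.range (N + 1), (A n).indicator (fun _ => D n) ω
        = ENNReal.ofReal (G N - 1) := by
    intro ω N hω
    have h1 : ∀ n ∈ Finset.range (N + 1),
        (A n).indicator (fun _ => D n) ω = ENNReal.ofReal (Δ n) := by
      intro n hn
      rw [Set.indicator_of_mem (hω n (Nat.lt_succ_iff.mp (Finset.mem_range.mp hn))), hDeq]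
    rw [Finset.sum_congr rfl h1, ← ENNReal.ofReal_sum_of_nonneg (fun n _ => hΔ0 n), hΔsum N]
  -- pointwise bound
  have hPW : ∀ ω, expE ((minScale K X ω / ENNReal.ofReal C) ^ t) ≤ 1 + T ω := by
    intro ω
    by_cases hne : ∃ n, K + 1 ≤ X n ω
    · by_cases hbd : BddAbove {n : ℕ | K + 1 ≤ X n ω}
      · obtain ⟨n₀, hn₀⟩ := hne
        have hSne : {n : ℕ | K + 1 ≤ X n ω}.Nonempty := ⟨n₀, hn₀⟩
        set N := sSup {n : ℕ | K + 1 ≤ X n ω} with hNdef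
        have hNS : K + 1 ≤ X N ω := Nat.sSup_mem hSne hbd
        have hmem : ∀ n, n ≤ N → ω ∈ A n := fun n hn => hAmem ω n N hn hNS
        have hMval : minScale K X ω = (3:ℝ≥0∞) ^ N := by
          rw [minScale]
          apply le_antisymm
          · apply iSup₂_le
            intro n hn
            exact pow_le_pow_right₀ (by norm_num) (le_csSup hbd hn)
          · exact le_iSup₂ (f := fun (n : ℕ) (_ : K + 1 ≤ X n ω) => (3:ℝ≥0∞) ^ n) N hNS
        have hLHS : expE ((minScale K X ω / ENNReal.ofReal C) ^ t) = ENNReal.ofReal (G N) := by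
          rw [hMval]
          have h3N : ((3:ℝ≥0∞)) ^ N / ENNReal.ofReal C = ENNReal.ofReal ((3:ℝ) ^ N / C) := by
            rw [ENNReal.ofReal_div_of_pos hC, ENNReal.ofReal_pow (by norm_num : (0:ℝ) ≤ 3)]
            norm_num
          rw [h3N, ENNReal.ofReal_rpow_of_pos (by positivity), hkey N,
            expE_ofReal (by positivity), hGdef]
        rw [hLHS]
        calc ENNReal.ofReal (G N) = 1 + ENNReal.ofReal (G N - 1) := by
              rw [← ENNReal.ofReal_one,
                ← ENNReal.ofReal_add zero_le_one (by linarith [hG1 N] : (0:ℝ) ≤ G N - 1)]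
              norm_num
          _ ≤ 1 + T ω := by
              apply add_le_add_right
              rw [← hGsum ω N hmem, hTeq ω]
              exact ENNReal.sum_le_tsum _
      · -- unbounded case : minScale = ⊤, but also T = ⊤
        have hAll : ∀ n, ω ∈ A n := by
          intro n
          obtain ⟨m, hmS, hnm⟩ := not_bddAbove_iff.mp hbd n
          exact hAmem ω n m hnm.le hmS
        have hTtop : T ω = ⊤ := by
          apply ENNReal.eq_top_of_forall_nnreal_le
          intro R
          obtain ⟨N, hN⟩ := exists_nat_ge ((R:ℝ) / (θ * (q - 1)))
          have hθq : 0 < θ * (q - 1) := mul_pos hθ0 (by linarith)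
          have h1 : (R:ℝ) ≤ G N - 1 := by
            have hb := bernoulli_pow hq1.le N
            have he := Real.add_one_le_exp (θ * q ^ N)
            rw [div_le_iff₀ hθq] at hN
            rw [hGdef]
            simp only
            nlinarith [mul_le_mul_of_nonneg_left hb hθ0.le, (Nat.cast_nonneg N : (0:ℝ) ≤ N)]
          calc (R : ℝ≥0∞) = ENNReal.ofReal (R : ℝ) := ENNReal.ofReal_coe_nnreal.symm
            _ ≤ ENNReal.ofReal (G N - 1) := ENNReal.ofReal_le_ofReal h1
            _ = ∑ n ∈ Finset.range (N + 1), (A n).indicator (fun _ => D n) ω :=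
                (hGsum ω N (fun n _ => hAll n)).symm
            _ ≤ T ω := by rw [hTeq ω]; exact ENNReal.sum_le_tsum _
        rw [hTtop]
        simp
    · have hM0 : minScale K X ω = 0 := by
        rw [minScale]
        apply le_antisymm _ (zero_le)
        apply iSup₂_le
        intro n hn
        exact absurd ⟨n, hn⟩ hne
      rw [hM0, ENNReal.zero_div, ENNReal.zero_rpow_of_pos ht]
      have h0 : expE 0 = 1 := by
        rw [expE, if_neg (by simp)]
        simp
      rw [h0]
      exact le_self_add
  -- integration
  have hTim : ∀ n : ℕ, Measurable ((A n).indicator (fun _ => D n)) :=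
    fun n => measurable_const.indicator (hAm n)
  have hTint : (∫⁻ ω, (1 + T ω) ∂P) = 1 + ∑' n, D n * P (A n) := by
    calc (∫⁻ ω, (1 + T ω) ∂P)
        = ∫⁻ _ω, (1:ℝ≥0∞) ∂P + ∫⁻ ω, T ω ∂P := lintegral_add_left measurable_const _
      _ = 1 + ∑' n, D n * P (A n) := by
          rw [lintegral_one, measure_univ]
          congr 1
          have he : ∀ ω, T ω = ∑' n, (A n).indicator (fun _ => D n) ω := hTeq
          rw [lintegral_congr he, lintegral_tsum (fun n => (hTim n).aemeasurable)]
          congr 1; funext n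
          rw [lintegral_indicator_const (hAm n)]
  -- the sum is at most 1
  have hsum_le : ∑' n, D n * P (A n) ≤ 1 := by
    have hreal : ∀ n : ℕ, Δ n * (Real.exp (-(c * q ^ n)) * A0) ≤ (θ * (2 / d) * A0) * r ^ n := by
      intro n
      have hqn0 : (0:ℝ) ≤ q ^ n := (pow_pos hq0 n).le
      have h1 : Δ n ≤ θ * q ^ n * Real.exp (θ * q ^ n) := by
        have h := hΔle n
        rw [hGdef] at h
        exact h
      have h2 : Real.exp (θ * q ^ n) * Real.exp (-(c * q ^ n)) ≤ Real.exp (-(d * q ^ n)) := by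
        rw [← Real.exp_add]
        apply Real.exp_le_exp.mpr
        have hh := mul_le_mul_of_nonneg_right hθd hqn0
        rw [hcd]
        nlinarith
      have h31 : q ^ n * Real.exp (-(d / 2 * q ^ n)) ≤ 2 / d := by
        have hh := mul_exp_neg_le (show (0:ℝ) < d / 2 by positivity) hqn0
        have he : (1:ℝ) / (d / 2) = 2 / d := by
          field_simp
        linarith [he ▸ hh]
      have h32 : Real.exp (-(d / 2 * q ^ n)) ≤ r ^ n := by
        rw [hrdef, ← Real.exp_nat_mul]
        apply Real.exp_le_exp.mpr
        have hb := bernoulli_pow hq1.le n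
        nlinarith [mul_le_mul_of_nonneg_left hb (by positivity : (0:ℝ) ≤ d / 2)]
      have h3 : q ^ n * Real.exp (-(d * q ^ n)) ≤ (2 / d) * r ^ n := by
        have hsplit : Real.exp (-(d * q ^ n)) =
            Real.exp (-(d / 2 * q ^ n)) * Real.exp (-(d / 2 * q ^ n)) := by
          rw [← Real.exp_add]; ring_nf
        calc q ^ n * Real.exp (-(d * q ^ n))
            = (q ^ n * Real.exp (-(d / 2 * q ^ n))) * Real.exp (-(d / 2 * q ^ n)) := by
              rw [hsplit]; ring
          _ ≤ (2 / d) * r ^ n :=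
              mul_le_mul h31 h32 (Real.exp_nonneg _) (by positivity)
      calc Δ n * (Real.exp (-(c * q ^ n)) * A0)
          ≤ (θ * q ^ n * Real.exp (θ * q ^ n)) * (Real.exp (-(c * q ^ n)) * A0) :=
            mul_le_mul_of_nonneg_right h1 (by positivity)
        _ = (θ * A0) * (q ^ n * (Real.exp (θ * q ^ n) * Real.exp (-(c * q ^ n)))) := by ring
        _ ≤ (θ * A0) * (q ^ n * Real.exp (-(d * q ^ n))) := by
            apply mul_le_mul_of_nonneg_left _ (by positivity)
            exact mul_le_mul_of_nonneg_left h2 hqn0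
        _ ≤ (θ * A0) * ((2 / d) * r ^ n) :=
            mul_le_mul_of_nonneg_left h3 (by positivity)
        _ = (θ * (2 / d) * A0) * r ^ n := by ring
    calc ∑' n, D n * P (A n)
        ≤ ∑' n : ℕ, 2 * ENNReal.ofReal ((θ * (2 / d) * A0) * r ^ n) := by
          apply ENNReal.tsum_le_tsum
          intro n
          calc D n * P (A n)
              ≤ ENNReal.ofReal (Δ n) * (2 * ENNReal.ofReal (Real.exp (-(c * q ^ n)) * A0)) := by
                rw [hDeq n]
                exact mul_le_mul_right (hPA n) _
            _ = 2 * ENNReal.ofReal (Δ n * (Real.exp (-(c * q ^ n)) * A0)) := by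
                rw [ENNReal.ofReal_mul (hΔ0 n)]; ring
            _ ≤ 2 * ENNReal.ofReal ((θ * (2 / d) * A0) * r ^ n) :=
                mul_le_mul_right (ENNReal.ofReal_le_ofReal (hreal n)) _
      _ = 2 * (ENNReal.ofReal (θ * (2 / d) * A0) * ∑' n : ℕ, (ENNReal.ofReal r) ^ n) := by
          rw [ENNReal.tsum_mul_left]
          congr 1
          rw [← ENNReal.tsum_mul_left]
          congr 1; funext n
          rw [ENNReal.ofReal_mul (by positivity), ENNReal.ofReal_pow hr0.le]
      _ ≤ 1 := by
          rw [ENNReal.tsum_geometric, ← ENNReal.ofReal_one,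
            ← ENNReal.ofReal_sub _ hr0.le, ← ENNReal.ofReal_inv_of_pos h1r,
            ← ENNReal.ofReal_mul (by positivity)]
          have h2 : (2:ℝ≥0∞) = ENNReal.ofReal 2 := by norm_num
          rw [h2, ← ENNReal.ofReal_mul (by norm_num)]
          apply ENNReal.ofReal_le_ofReal
          have key : θ * (4 * A0) ≤ d * (1 - r) := (le_div_iff₀ (by positivity)).mp hθ2
          have hd' : d ≠ 0 := hd.ne'
          have h1r' : (1:ℝ) - r ≠ 0 := h1r.ne'
          have e : 2 * (θ * (2 / d) * A0 * (1 - r)⁻¹) = (θ * (4 * A0)) / (d * (1 - r)) := by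
            field_simp
            ring
          rw [e, div_le_one (by positivity)]
          exact key
  -- conclusion
  refine ⟨C, hC, ?_, ?_⟩
  · calc (∫⁻ ω, expE ((minScale K X ω / ENNReal.ofReal C) ^ t) ∂P)
        ≤ ∫⁻ ω, (1 + T ω) ∂P := lintegral_mono hPW
      _ = 1 + ∑' n, D n * P (A n) := hTint
      _ ≤ 1 + 1 := add_le_add_right hsum_le 1
      _ = 2 := one_add_one_eq_two
  · have hTm : Measurable T := by
      rw [hTdef]
      exact Measurable.ennreal_tsum hTim
    have hgm : Measurable (fun ω => 1 + T ω) := measurable_const.add hTm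
    have hgne : (∫⁻ ω, (1 + T ω) ∂P) ≠ ⊤ := by
      apply ne_top_of_le_ne_top (by norm_num : (2:ℝ≥0∞) ≠ ⊤)
      calc (∫⁻ ω, (1 + T ω) ∂P) = 1 + ∑' n, D n * P (A n) := hTint
        _ ≤ 1 + 1 := add_le_add_right hsum_le 1
        _ = 2 := one_add_one_eq_two
    filter_upwards [ae_lt_top hgm hgne] with ω hω
    by_contra hM
    have hMt : minScale K X ω = ⊤ := top_le_iff.mp (not_lt.mp hM)
    have hle := hPW ω
    rw [hMt, ENNReal.top_div_of_ne_top ENNReal.ofReal_ne_top,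
      ENNReal.top_rpow_of_pos ht, expE, if_pos rfl] at hle
    exact absurd (top_le_iff.mp hle) hω.ne

end MinimalScale
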